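/- arXiv:2404.18299 — 4 statements merged into one kernel-verified Lean document; each statement's English description precedes it below -/
import Mathlib

section
/- Let 1 ≤ p < r ≤ ∞ and let V = (v_{ij}) be a symmetric n×n real matrix. Then the r→p operator norm of V is bounded above by ( Σ_{i=1}^n ( Σ_{j=1}^n |v_{ij}| )^{rp/(r-p)} )^{(r-p)/(rp)}. -/
open Matrix ENNReal

/-- The ℓ_q norm on ℝⁿ for an extended-real exponent `q ∈ [1,∞]`. -/
noncomputable def lnorm {n : ℕ} (q : ℝ≥0∞) (x : Fin n → ℝ) : ℝ :=
  if q = ⊤ then ⨆ i, |x i| else (∑ i, |x i| ^ q.toReal) ^ (1 / q.toReal)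

/-- The `r → p` operator norm of an `n × n` real matrix. -/
noncomputable def opNorm {n : ℕ} (r p : ℝ≥0∞) (A : Matrix (Fin n) (Fin n) ℝ) : ℝ :=
  sSup {c | ∃ x : Fin n → ℝ, lnorm r x ≤ 1 ∧ c = lnorm p (A.mulVec x)}

section helpers
open Finset Real

lemma key_ineq {n : ℕ} (a : Fin n → Fin n → ℝ) (ha : ∀ i j, 0 ≤ a i j)
    (hsymm : ∀ i j, a i j = a j i)
    (ξ : Fin n → ℝ) (hξ0 : ∀ j, 0 ≤ ξ j)
    {P R : ℝ} (hP : 1 ≤ P) (hPR : P < R)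
    (hξ : ∑ j, ξ j ^ R ≤ 1) :
    ∑ i, (∑ j, a i j * ξ j) ^ P ≤
      (∑ i, (∑ j, a i j) ^ (R*P/(R-P))) ^ (P/(R*P/(R-P))) := by
  have hP0 : (0:ℝ) < P := lt_of_lt_of_le one_pos hP
  have hR0 : (0:ℝ) < R := hP0.trans hPR
  have hD : (0:ℝ) < R - P := sub_pos.2 hPR
  have hden : (0:ℝ) < R*P - R + P := by nlinarith
  set q : ℝ := R*P/(R-P) with hq
  set s : ℝ := (R*P - R + P)/P with hs
  set σ : ℝ := P/s with hσ
  have hs0 : 0 < s := by positivity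
  have hs1 : 1 ≤ s := by rw [hs, le_div_iff₀ hP0]; nlinarith
  have hσ0 : 0 < σ := by positivity
  have hσ1 : σ ≤ 1 := by rw [hσ, div_le_one hs0]; rw [hs, le_div_iff₀ hP0]; nlinarith
  have hq0 : 0 < q := by positivity
  have hq1 : 1 < q := by rw [hq, lt_div_iff₀ hD]; nlinarith
  have hq1' : q - 1 = (R*P - R + P)/(R-P) := by rw [hq]; field_simp [hD.ne']; ring
  have hq1n : (0:ℝ) < q - 1 := by rw [hq1']; positivity
  have hPσ : P * (1 - 1/s) = P - σ := by rw [hσ]; ring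
  have hqq : q/(q-1) = (R*P)/(R*P-R+P) := by
    rw [hq, hq1', div_div_div_eq, mul_comm (R*P) (R-P), mul_div_mul_left _ _ hD.ne']
  have hsq' : s * (q/(q-1)) = R := by
    rw [hs, hqq]; field_simp [hP0.ne', hden.ne', (show (0:ℝ) < R*(P-1)+P by linarith).ne']
  have hσ' : σ = P*P/(R*P-R+P) := by rw [hσ, hs, div_div_eq_mul_div]
  have hcomb : 1 - σ + 1/q * σ = P/q := by
    rw [hσ', hq]; field_simp [hD.ne', hden.ne', hR0.ne', (show (0:ℝ) < R*(P-1)+P by linarith).ne']; ring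
  -- abbreviations
  set S : Fin n → ℝ := fun i => ∑ j, a i j with hS
  set T : Fin n → ℝ := fun i => ∑ j, a i j * ξ j ^ s with hT
  have hSnn : ∀ i, 0 ≤ S i := fun i => sum_nonneg fun j _ => ha i j
  have hTnn : ∀ i, 0 ≤ T i := fun i =>
    sum_nonneg fun j _ => mul_nonneg (ha i j) (rpow_nonneg (hξ0 j) s)
  have hSq_nn : 0 ≤ ∑ i, S i ^ q := sum_nonneg fun i _ => rpow_nonneg (hSnn i) q
  -- Step A : pointwise
  have stepA : ∀ i, (∑ j, a i j * ξ j) ^ P ≤ S i ^ (P - σ) * T i ^ σ := by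
    intro i
    have h1 : ∑ j, a i j * ξ j ≤ S i ^ (1 - s⁻¹) * T i ^ s⁻¹ :=
      inner_le_weight_mul_Lp_of_nonneg univ hs1 (a i) ξ (ha i) hξ0
    have h2 := Real.rpow_le_rpow (sum_nonneg fun j _ => mul_nonneg (ha i j) (hξ0 j)) h1 hP0.le
    calc (∑ j, a i j * ξ j) ^ P ≤ (S i ^ (1 - s⁻¹) * T i ^ s⁻¹) ^ P := h2
      _ = S i ^ (P - σ) * T i ^ σ := by
          rw [Real.mul_rpow (rpow_nonneg (hSnn i) _) (rpow_nonneg (hTnn i) _),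
            ← Real.rpow_mul (hSnn i), ← Real.rpow_mul (hTnn i),
            show (1 - s⁻¹) * P = P - σ by rw [hσ]; ring,
            show s⁻¹ * P = σ by rw [hσ]; ring]
  -- Step D+E : ∑ T ≤ (∑ S^q)^(1/q)
  have hsum_xR : 0 ≤ ∑ j, ξ j ^ R := sum_nonneg fun j _ => rpow_nonneg (hξ0 j) R
  have stepDE : ∑ i, T i ≤ (∑ i, S i ^ q) ^ (1/q) := by
    have hswap : ∑ i, T i = ∑ j, S j * ξ j ^ s := by
      rw [hT]
      simp only []
      rw [Finset.sum_comm]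
      refine Finset.sum_congr rfl fun j _ => ?_
      rw [← Finset.sum_mul]
      congr 1
      exact Finset.sum_congr rfl fun i _ => hsymm i j
    rw [hswap]
    have hconj : Real.HolderConjugate q (q/(q-1)) := by
      rw [Real.holderConjugate_iff]; constructor
      · exact hq1
      · rw [hqq, hq]; field_simp [hD.ne', hden.ne', hR0.ne', hP0.ne']; ring
    have hhold := Real.inner_le_Lp_mul_Lq_of_nonneg univ hconj
      (f := S) (g := fun j => ξ j ^ s)
      (fun i _ => hSnn i) (fun j _ => rpow_nonneg (hξ0 j) s)
    have hxi : ∑ j, (ξ j ^ s) ^ (q/(q-1)) = ∑ j, ξ j ^ R := by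
      refine Finset.sum_congr rfl fun j _ => ?_
      rw [← Real.rpow_mul (hξ0 j), hsq']
    rw [hxi] at hhold
    calc ∑ j, S j * ξ j ^ s
        ≤ (∑ i, S i ^ q) ^ (1/q) * (∑ j, ξ j ^ R) ^ (1/(q/(q-1))) := hhold
      _ ≤ (∑ i, S i ^ q) ^ (1/q) * 1 := by
          refine mul_le_mul_of_nonneg_left ?_ (rpow_nonneg hSq_nn _)
          exact Real.rpow_le_one hsum_xR hξ (by positivity)
      _ = (∑ i, S i ^ q) ^ (1/q) := mul_one _
  -- Step C : Hölder over i
  have stepC : ∑ i, S i ^ (P - σ) * T i ^ σ ≤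
      (∑ i, S i ^ q) ^ (1 - σ) * (∑ i, T i) ^ σ := by
    rcases eq_or_lt_of_le hP with hP1 | hP1
    · -- P = 1, σ = 1
      have hσeq : σ = 1 := by rw [hσ', ← hP1]; rw [show R*1-R+1 = (1:ℝ) by ring]; simp
      simp only [hσeq, ← hP1, sub_self, Real.rpow_zero, Real.rpow_one, one_mul,
        Real.rpow_one]
      simp
    · have h1σ : 0 < 1 - σ := by
        rw [hσ', sub_pos, div_lt_one hden]; nlinarith
      have hqc : (P - σ) * (1-σ)⁻¹ = q := by
        have hd2 : (0:ℝ) < R*P - R + P - P*P := by nlinarith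
        rw [hσ', hq,
          show 1 - P*P/(R*P-R+P) = (R*P-R+P-P*P)/(R*P-R+P) by field_simp]
        field_simp [hden.ne', hd2.ne', (show (0:ℝ) < R*(P-1)+P by linarith).ne', (show (0:ℝ) < R*(P-1)+P-P^2 by nlinarith).ne']
        ring
      have hconj : Real.HolderConjugate (1-σ)⁻¹ σ⁻¹ := by
        rw [Real.holderConjugate_iff]; constructor
        · rw [lt_inv_comm₀ one_pos h1σ]; simpa using hσ0
        · rw [inv_inv, inv_inv]; ring
      have hhold := Real.inner_le_Lp_mul_Lq_of_nonneg univ hconj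
        (f := fun i => S i ^ (P - σ)) (g := fun i => T i ^ σ)
        (fun i _ => rpow_nonneg (hSnn i) _) (fun i _ => rpow_nonneg (hTnn i) _)
      calc ∑ i, S i ^ (P - σ) * T i ^ σ
          ≤ (∑ i, (S i ^ (P-σ)) ^ (1-σ)⁻¹) ^ (1/(1-σ)⁻¹)
            * (∑ i, (T i ^ σ) ^ σ⁻¹) ^ (1/σ⁻¹) := hhold
        _ = (∑ i, S i ^ q) ^ (1 - σ) * (∑ i, T i) ^ σ := by
            rw [one_div, inv_inv, one_div, inv_inv]
            congr 1
            · congr 1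
              refine Finset.sum_congr rfl fun i _ => ?_
              rw [← Real.rpow_mul (hSnn i), hqc]
            · congr 1
              refine Finset.sum_congr rfl fun i _ => ?_
              rw [← Real.rpow_mul (hTnn i), mul_inv_cancel₀ hσ0.ne', Real.rpow_one]
  -- combine
  calc ∑ i, (∑ j, a i j * ξ j) ^ P
      ≤ ∑ i, S i ^ (P - σ) * T i ^ σ := Finset.sum_le_sum fun i _ => stepA i
    _ ≤ (∑ i, S i ^ q) ^ (1 - σ) * (∑ i, T i) ^ σ := stepC
    _ ≤ (∑ i, S i ^ q) ^ (1 - σ) * ((∑ i, S i ^ q) ^ (1/q)) ^ σ := by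
        refine mul_le_mul_of_nonneg_left ?_ (rpow_nonneg hSq_nn _)
        exact Real.rpow_le_rpow (sum_nonneg fun i _ => hTnn i) stepDE hσ0.le
    _ = (∑ i, S i ^ q) ^ (P/q) := by
        rw [← Real.rpow_mul hSq_nn, ← Real.rpow_add' hSq_nn (by rw [hcomb]; positivity),
          hcomb]

end helpers

/-- Row-sum upper bound for the `r → p` norm of a symmetric matrix, where
`γ = 1/p - 1/r` and the exponent `rp/(r-p)` is `1/γ`. -/
theorem opNorm_le_rowSum {n : ℕ} (V : Matrix (Fin n) (Fin n) ℝ) (hV : V.IsSymm)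
    (r p : ℝ≥0∞) (hp : 1 ≤ p) (hpr : p < r) :
    opNorm r p V ≤
      (∑ i, (∑ j, |V i j|) ^ (1 / ((p⁻¹).toReal - (r⁻¹).toReal)))
        ^ ((p⁻¹).toReal - (r⁻¹).toReal) := by
  classical
  have hpt : p ≠ ⊤ := (hpr.trans_le le_top).ne
  have hP1 : 1 ≤ p.toReal := by
    have := ENNReal.toReal_mono hpt hp; simpa using this
  have hP0 : 0 < p.toReal := lt_of_lt_of_le one_pos hP1
  set P := p.toReal with hPdef
  have hEp : (p⁻¹).toReal = P⁻¹ := by rw [ENNReal.toReal_inv]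
  have RHSnn : (0:ℝ) ≤ (∑ i, (∑ j, |V i j|) ^ (1 / ((p⁻¹).toReal - (r⁻¹).toReal)))
      ^ ((p⁻¹).toReal - (r⁻¹).toReal) := by positivity
  apply Real.sSup_le _ RHSnn
  rintro c ⟨x, hx, rfl⟩
  have hmv : ∀ i, |V.mulVec x i| ≤ ∑ j, |V i j| * |x j| := by
    intro i
    simp only [Matrix.mulVec, dotProduct]
    exact (Finset.abs_sum_le_sum_abs _ _).trans
      (le_of_eq (Finset.sum_congr rfl fun j _ => abs_mul _ _))
  by_cases hrt : r = ⊤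
  · subst hrt
    have hxj : ∀ j, |x j| ≤ 1 := by
      intro j
      rw [lnorm, if_pos rfl] at hx
      exact le_trans (le_ciSup (f := fun i => |x i|) (Set.finite_range fun i => |x i|).bddAbove j) hx
    simp only [ENNReal.inv_top, ENNReal.toReal_zero, sub_zero, hEp, one_div, inv_inv]
    rw [lnorm, if_neg hpt, ← hPdef, one_div]
    have hb : ∀ i, |V.mulVec x i| ≤ ∑ j, |V i j| :=
      fun i => (hmv i).trans (Finset.sum_le_sum fun j _ =>
        mul_le_of_le_one_right (abs_nonneg _) (hxj j))
    refine Real.rpow_le_rpow (Finset.sum_nonneg fun i _ => Real.rpow_nonneg (abs_nonneg _) _)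
      (Finset.sum_le_sum fun i _ => Real.rpow_le_rpow (abs_nonneg _) (hb i) hP0.le)
      (by positivity)
  · set R := r.toReal with hRdef
    have hR : P < R := by
      rw [hPdef, hRdef]
      exact (ENNReal.toReal_lt_toReal hpt hrt).2 hpr
    have hR0 : (0:ℝ) < R := hP0.trans hR
    have hD : (0:ℝ) < R - P := sub_pos.2 hR
    have hEr : (r⁻¹).toReal = R⁻¹ := by rw [ENNReal.toReal_inv]
    have hE : (p⁻¹).toReal - (r⁻¹).toReal = (R-P)/(R*P) := by
      rw [hEp, hEr]; field_simp
    rw [hE, one_div_div]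
    -- from hx : ∑ |x j|^R ≤ 1
    rw [lnorm, if_neg hrt, ← hRdef] at hx
    have hsx : (0:ℝ) ≤ ∑ j, |x j| ^ R :=
      Finset.sum_nonneg fun j _ => Real.rpow_nonneg (abs_nonneg _) _
    have hξ : ∑ j, |x j| ^ R ≤ 1 := by
      have h2 := Real.rpow_le_rpow (Real.rpow_nonneg hsx _) hx hR0.le
      rwa [← Real.rpow_mul hsx, one_div, inv_mul_cancel₀ hR0.ne', Real.rpow_one,
        Real.one_rpow] at h2
    have hsymm : ∀ i j, |V i j| = |V j i| := by
      intro i j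
      have := congrFun (congrFun hV i) j
      rw [Matrix.transpose_apply] at this
      rw [← this]
    have hkey := key_ineq (fun i j => |V i j|) (fun i j => abs_nonneg _) hsymm
      (fun j => |x j|) (fun j => abs_nonneg _) hP1 hR hξ
    have hSq_nn : (0:ℝ) ≤ ∑ i, (∑ j, |V i j|) ^ (R*P/(R-P)) :=
      Finset.sum_nonneg fun i _ => Real.rpow_nonneg
        (Finset.sum_nonneg fun j _ => abs_nonneg _) _
    rw [lnorm, if_neg hpt, ← hPdef]
    calc (∑ i, |V.mulVec x i| ^ P) ^ (1/P)
        ≤ (∑ i, (∑ j, |V i j| * |x j|) ^ P) ^ (1/P) := by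
          refine Real.rpow_le_rpow (Finset.sum_nonneg fun i _ =>
            Real.rpow_nonneg (abs_nonneg _) _)
            (Finset.sum_le_sum fun i _ =>
              Real.rpow_le_rpow (abs_nonneg _) (hmv i) hP0.le) (by positivity)
      _ ≤ ((∑ i, (∑ j, |V i j|) ^ (R*P/(R-P))) ^ (P/(R*P/(R-P)))) ^ (1/P) := by
          refine Real.rpow_le_rpow (Finset.sum_nonneg fun i _ =>
            Real.rpow_nonneg (Finset.sum_nonneg fun j _ =>
              mul_nonneg (abs_nonneg _) (abs_nonneg _)) _) hkey (by positivity)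
      _ = (∑ i, (∑ j, |V i j|) ^ (R*P/(R-P))) ^ ((R-P)/(R*P)) := by
          rw [← Real.rpow_mul hSq_nn]
          congr 1
          field_simp
end

section
/- Let 1 ≤ p < r ≤ ∞ and let V be a symmetric n×n matrix with nonnegative entries. For any vectors x, y ∈ ℝⁿ with ‖x‖_r = 1 and ‖y‖_{p*} = 1, one has Σ_{i,j} v_{ij} x_i y_j ≤ ( Σ_i ( Σ_j v_{ij} )^{rp/(r-p)} )^{(r-p)/(rp)}. (Key step: apply Hölder's inequality twice after splitting |v_{ij}| = |v_{ij}|^{p/(rp-r+p)} · |v_{ij}|^{(rp-r)/(rp-r+p)}.) -/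
/-- The ℓ_q norm on ℝⁿ for a finite real exponent `q`. -/
noncomputable def rnorm {n : ℕ} (q : ℝ) (x : Fin n → ℝ) : ℝ :=
  (∑ i, |x i| ^ q) ^ (1 / q)

/-- Key Hölder step bounding the bilinear form of a nonnegative symmetric matrix. -/
theorem bilinear_le_rowSum {n : ℕ} (V : Matrix (Fin n) (Fin n) ℝ) (hV : V.IsSymm)
    (hnn : ∀ i j, 0 ≤ V i j) (p r : ℝ) (hp : 1 < p) (hpr : p < r)
    (x y : Fin n → ℝ) (hx : rnorm r x = 1) (hy : rnorm (p / (p - 1)) y = 1) :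
    ∑ i, ∑ j, V i j * x i * y j ≤
      (∑ i, (∑ j, V i j) ^ (r * p / (r - p))) ^ ((r - p) / (r * p)) := by
  have hp0 : (0:ℝ) < p := lt_trans one_pos hp
  have hp1 : (0:ℝ) < p - 1 := by linarith
  have hr1 : 1 < r := hp.trans hpr
  have hr0 : (0:ℝ) < r := by linarith
  have hrp : (0:ℝ) < r - p := by linarith
  set q : ℝ := p / (p - 1) with hq_def
  set s : ℝ := r * p / (r - p) with hs_def
  have hD : (0:ℝ) < r * p - r + p := by nlinarith
  have hne1 : r - p ≠ 0 := hrp.ne'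
  have hne2 : r * p - r + p ≠ 0 := hD.ne'
  have hne3 : p - 1 ≠ 0 := hp1.ne'
  have hne4 : p ≠ 0 := hp0.ne'
  have hne5 : r ≠ 0 := hr0.ne'
  set s' : ℝ := r * p / (r * p - r + p) with hs'_def
  set P : ℝ := (r * p - r + p) / p with hP_def
  set Q : ℝ := (r * p - r + p) / (r * (p - 1)) with hQ_def
  have hq1 : 1 < q := by rw [hq_def, lt_div_iff₀ hp1]; linarith
  have hq0 : (0:ℝ) < q := lt_trans one_pos hq1
  have hs1 : 1 < s := by rw [hs_def, lt_div_iff₀ hrp]; nlinarith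
  have hs0 : (0:ℝ) < s := lt_trans one_pos hs1
  have hs'0 : (0:ℝ) < s' := by rw [hs'_def]; exact div_pos (by positivity) hD
  have conj1 : s.HolderConjugate s' := by
    refine Real.holderConjugate_iff.mpr ⟨hs1, ?_⟩
    rw [hs_def, hs'_def]
    field_simp
    ring
  have conjPQ : P.HolderConjugate Q := by
    refine Real.holderConjugate_iff.mpr ⟨?_, ?_⟩
    · rw [hP_def, lt_div_iff₀ hp0]; nlinarith
    · rw [hP_def, hQ_def]
      field_simp
      ring
  have e_sum : 1/s + 1/r + 1/q = 1 := by
    rw [hs_def, hq_def]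
    field_simp
    ring
  have es'P : s' * P = r := by rw [hs'_def, hP_def]; field_simp; try ring
  have es'Q : s' * Q = q := by rw [hs'_def, hQ_def, hq_def]; field_simp; try ring
  have esrP : s / r * P = s - 1 := by rw [hs_def, hP_def]; field_simp; try ring
  have esqQ : s / q * Q = s - 1 := by rw [hs_def, hq_def, hQ_def]; field_simp; try ring
  set w : Fin n → ℝ := fun i => ∑ j, V i j with hw_def
  have hw : ∀ i, 0 ≤ w i := fun i => Finset.sum_nonneg fun j _ => hnn i j
  have hvwi : ∀ i j, V i j ≤ w i := fun i j =>
    Finset.single_le_sum (fun k _ => hnn i k) (Finset.mem_univ j)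
  have hvwj : ∀ i j, V i j ≤ w j := fun i j => (hV.apply i j) ▸ hvwi j i
  have hcol : ∀ j, ∑ i, V i j = w j := by
    intro j
    exact Finset.sum_congr rfl fun i _ => (hV.apply i j).symm
  -- the three split factors
  set F1 : Fin n × Fin n → ℝ :=
    fun z => V z.1 z.2 ^ (1/s) * w z.1 ^ (1/r) * w z.2 ^ (1/q) with hF1_def
  set F2 : Fin n × Fin n → ℝ :=
    fun z => V z.1 z.2 ^ (1/r) * |x z.1| * w z.1 ^ (-(1/r)) with hF2_def
  set F3 : Fin n × Fin n → ℝ :=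
    fun z => V z.1 z.2 ^ (1/q) * |y z.2| * w z.2 ^ (-(1/q)) with hF3_def
  have hF1nn : ∀ z, 0 ≤ F1 z := fun z =>
    mul_nonneg (mul_nonneg (Real.rpow_nonneg (hnn _ _) _) (Real.rpow_nonneg (hw _) _))
      (Real.rpow_nonneg (hw _) _)
  have hF2nn : ∀ z, 0 ≤ F2 z := fun z =>
    mul_nonneg (mul_nonneg (Real.rpow_nonneg (hnn _ _) _) (abs_nonneg _))
      (Real.rpow_nonneg (hw _) _)
  have hF3nn : ∀ z, 0 ≤ F3 z := fun z =>
    mul_nonneg (mul_nonneg (Real.rpow_nonneg (hnn _ _) _) (abs_nonneg _))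
      (Real.rpow_nonneg (hw _) _)
  -- pointwise splitting identity
  have key : ∀ i j, V i j * |x i| * |y j| = F1 (i, j) * (F2 (i, j) * F3 (i, j)) := by
    intro i j
    simp only [hF1_def, hF2_def, hF3_def]
    rcases eq_or_lt_of_le (hnn i j) with h0 | hpos
    · rw [← h0, Real.zero_rpow (by positivity : (1:ℝ)/s ≠ 0)]
      ring
    · have hwi : 0 < w i := lt_of_lt_of_le hpos (hvwi i j)
      have hwj : 0 < w j := lt_of_lt_of_le hpos (hvwj i j)
      have hv : V i j ^ (1/s) * V i j ^ (1/r) * V i j ^ (1/q) = V i j := by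
        rw [← Real.rpow_add hpos, ← Real.rpow_add hpos, e_sum, Real.rpow_one]
      have hwi1 : w i ^ (1/r) * w i ^ (-(1/r)) = 1 := by
        rw [← Real.rpow_add hwi]
        simp
      have hwj1 : w j ^ (1/q) * w j ^ (-(1/q)) = 1 := by
        rw [← Real.rpow_add hwj]
        simp
      calc V i j * |x i| * |y j|
          = (V i j ^ (1/s) * V i j ^ (1/r) * V i j ^ (1/q)) *
              (w i ^ (1/r) * w i ^ (-(1/r))) * (w j ^ (1/q) * w j ^ (-(1/q))) *
              (|x i| * |y j|) := by rw [hv, hwi1, hwj1]; ring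
        _ = V i j ^ (1/s) * w i ^ (1/r) * w j ^ (1/q) *
              (V i j ^ (1/r) * |x i| * w i ^ (-(1/r)) *
                (V i j ^ (1/q) * |y j| * w j ^ (-(1/q)))) := by ring
  -- norm facts
  have hxr : ∑ i, |x i| ^ r = 1 := by
    have h1 : ((∑ i, |x i| ^ r) ^ (1/r)) ^ r = 1 := by
      rw [show (∑ i, |x i| ^ r) ^ (1/r) = rnorm r x from rfl, hx, Real.one_rpow]
    rwa [← Real.rpow_mul (Finset.sum_nonneg fun i _ => Real.rpow_nonneg (abs_nonneg _) _),
      one_div, inv_mul_cancel₀ hne5, Real.rpow_one] at h1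
  have hyq : ∑ j, |y j| ^ q = 1 := by
    have h1 : ((∑ j, |y j| ^ q) ^ (1/q)) ^ q = 1 := by
      rw [show (∑ j, |y j| ^ q) ^ (1/q) = rnorm q y from rfl, hy, Real.one_rpow]
    rwa [← Real.rpow_mul (Finset.sum_nonneg fun i _ => Real.rpow_nonneg (abs_nonneg _) _),
      one_div, inv_mul_cancel₀ hq0.ne', Real.rpow_one] at h1
  -- bound on ∑ F2 ^ r
  have hF2r : ∑ z : Fin n × Fin n, F2 z ^ r ≤ 1 := by
    have hpt : ∀ z : Fin n × Fin n, F2 z ^ r = V z.1 z.2 * (|x z.1| ^ r * w z.1 ^ (-1:ℝ)) := by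
      intro z
      rw [hF2_def]
      rw [Real.mul_rpow (mul_nonneg (Real.rpow_nonneg (hnn _ _) _) (abs_nonneg _))
          (Real.rpow_nonneg (hw _) _),
        Real.mul_rpow (Real.rpow_nonneg (hnn _ _) _) (abs_nonneg _),
        ← Real.rpow_mul (hnn _ _), ← Real.rpow_mul (hw _),
        one_div, inv_mul_cancel₀ hne5, Real.rpow_one, neg_mul, inv_mul_cancel₀ hne5]
      ring
    calc ∑ z : Fin n × Fin n, F2 z ^ r
        = ∑ i, ∑ j, V i j * (|x i| ^ r * w i ^ (-1:ℝ)) := by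
          rw [show (∑ z : Fin n × Fin n, F2 z ^ r)
              = ∑ z : Fin n × Fin n, V z.1 z.2 * (|x z.1| ^ r * w z.1 ^ (-1:ℝ)) from
            Finset.sum_congr rfl fun z _ => hpt z]
          exact Fintype.sum_prod_type _
      _ ≤ ∑ i, |x i| ^ r := by
          apply Finset.sum_le_sum
          intro i _
          rw [← Finset.sum_mul]
          rcases eq_or_lt_of_le (hw i) with h0 | hpos
          · rw [show (∑ j, V i j) = w i from rfl, ← h0, zero_mul]
            exact Real.rpow_nonneg (abs_nonneg _) _
          · rw [show (∑ j, V i j) = w i from rfl, Real.rpow_neg_one,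
              mul_comm, mul_assoc, inv_mul_cancel₀ hpos.ne', mul_one]
      _ = 1 := hxr
  -- bound on ∑ F3 ^ q
  have hF3q : ∑ z : Fin n × Fin n, F3 z ^ q ≤ 1 := by
    have hpt : ∀ z : Fin n × Fin n, F3 z ^ q = V z.1 z.2 * (|y z.2| ^ q * w z.2 ^ (-1:ℝ)) := by
      intro z
      rw [hF3_def]
      rw [Real.mul_rpow (mul_nonneg (Real.rpow_nonneg (hnn _ _) _) (abs_nonneg _))
          (Real.rpow_nonneg (hw _) _),
        Real.mul_rpow (Real.rpow_nonneg (hnn _ _) _) (abs_nonneg _),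
        ← Real.rpow_mul (hnn _ _), ← Real.rpow_mul (hw _),
        one_div, inv_mul_cancel₀ hq0.ne', Real.rpow_one, neg_mul, inv_mul_cancel₀ hq0.ne']
      ring
    calc ∑ z : Fin n × Fin n, F3 z ^ q
        = ∑ j, ∑ i, V i j * (|y j| ^ q * w j ^ (-1:ℝ)) := by
          rw [show (∑ z : Fin n × Fin n, F3 z ^ q)
              = ∑ z : Fin n × Fin n, V z.1 z.2 * (|y z.2| ^ q * w z.2 ^ (-1:ℝ)) from
            Finset.sum_congr rfl fun z _ => hpt z]
          rw [Fintype.sum_prod_type]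
          exact Finset.sum_comm
      _ ≤ ∑ j, |y j| ^ q := by
          apply Finset.sum_le_sum
          intro j _
          rw [← Finset.sum_mul, hcol j]
          rcases eq_or_lt_of_le (hw j) with h0 | hpos
          · rw [← h0, zero_mul]
            exact Real.rpow_nonneg (abs_nonneg _) _
          · rw [Real.rpow_neg_one, mul_comm, mul_assoc, inv_mul_cancel₀ hpos.ne', mul_one]
      _ = 1 := hyq
  -- bound on ∑ F1 ^ s
  have hwpow : ∀ i, w i * w i ^ (s - 1) = w i ^ s := by
    intro i
    rcases eq_or_lt_of_le (hw i) with h0 | hpos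
    · rw [← h0, Real.zero_rpow hs0.ne', Real.zero_rpow (by linarith : s - 1 ≠ 0), mul_zero]
    · have h := Real.rpow_add hpos 1 (s - 1)
      rw [Real.rpow_one] at h
      rw [← h]
      norm_num
  have hF1s : ∑ z : Fin n × Fin n, F1 z ^ s ≤ ∑ i, w i ^ s := by
    have hpt : ∀ z : Fin n × Fin n,
        F1 z ^ s ≤ V z.1 z.2 * (w z.1 ^ (s-1) / P) + V z.1 z.2 * (w z.2 ^ (s-1) / Q) := by
      intro z
      have heq : F1 z ^ s = V z.1 z.2 * (w z.1 ^ (s/r) * w z.2 ^ (s/q)) := by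
        rw [hF1_def]
        rw [Real.mul_rpow (mul_nonneg (Real.rpow_nonneg (hnn _ _) _) (Real.rpow_nonneg (hw _) _))
            (Real.rpow_nonneg (hw _) _),
          Real.mul_rpow (Real.rpow_nonneg (hnn _ _) _) (Real.rpow_nonneg (hw _) _),
          ← Real.rpow_mul (hnn _ _), ← Real.rpow_mul (hw _), ← Real.rpow_mul (hw _),
          one_div_mul_cancel hs0.ne', Real.rpow_one,
          show 1/r * s = s/r by ring, show 1/q * s = s/q by ring]
        ring
      rw [heq]
      have young := Real.young_inequality_of_nonneg
        (Real.rpow_nonneg (hw z.1) (s/r)) (Real.rpow_nonneg (hw z.2) (s/q)) conjPQ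
      rw [← Real.rpow_mul (hw z.1), ← Real.rpow_mul (hw z.2), esrP, esqQ] at young
      calc V z.1 z.2 * (w z.1 ^ (s/r) * w z.2 ^ (s/q))
          ≤ V z.1 z.2 * (w z.1 ^ (s-1) / P + w z.2 ^ (s-1) / Q) :=
            mul_le_mul_of_nonneg_left young (hnn _ _)
        _ = V z.1 z.2 * (w z.1 ^ (s-1) / P) + V z.1 z.2 * (w z.2 ^ (s-1) / Q) := by ring
    calc ∑ z : Fin n × Fin n, F1 z ^ s
        ≤ ∑ z : Fin n × Fin n,
            (V z.1 z.2 * (w z.1 ^ (s-1) / P) + V z.1 z.2 * (w z.2 ^ (s-1) / Q)) :=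
          Finset.sum_le_sum fun z _ => hpt z
      _ = (∑ i, w i ^ s) / P + (∑ i, w i ^ s) / Q := by
          rw [Finset.sum_add_distrib]
          congr 1
          · rw [Fintype.sum_prod_type]
            dsimp only
            rw [Finset.sum_div]
            refine Finset.sum_congr rfl fun i _ => ?_
            rw [← Finset.sum_mul, show (∑ j, V i j) = w i from rfl,
              ← mul_div_assoc, hwpow i]
          · rw [Fintype.sum_prod_type]
            dsimp only
            rw [Finset.sum_comm, Finset.sum_div]
            refine Finset.sum_congr rfl fun j _ => ?_
            rw [← Finset.sum_mul, hcol j, ← mul_div_assoc, hwpow j]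
      _ = ∑ i, w i ^ s := by
          rw [div_add_div _ _ (ne_of_gt conjPQ.pos) (ne_of_gt conjPQ.symm.pos),
            div_eq_iff (mul_ne_zero conjPQ.ne_zero conjPQ.symm.ne_zero),
            conjPQ.mul_eq_add]
          ring
  -- Hölder for F2 * F3 with exponents P, Q
  have h23 : ∑ z : Fin n × Fin n, (F2 z * F3 z) ^ s' ≤ 1 := by
    have step1 : ∑ z : Fin n × Fin n, (F2 z * F3 z) ^ s'
        = ∑ z : Fin n × Fin n, F2 z ^ s' * F3 z ^ s' :=
      Finset.sum_congr rfl fun z _ => Real.mul_rpow (hF2nn z) (hF3nn z)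
    have step2 := Real.inner_le_Lp_mul_Lq_of_nonneg (Finset.univ : Finset (Fin n × Fin n))
      (f := fun z => F2 z ^ s') (g := fun z => F3 z ^ s') conjPQ
      (fun z _ => Real.rpow_nonneg (hF2nn z) _) (fun z _ => Real.rpow_nonneg (hF3nn z) _)
    have step3 : ∀ z : Fin n × Fin n, (F2 z ^ s') ^ P = F2 z ^ r := by
      intro z; rw [← Real.rpow_mul (hF2nn z), es'P]
    have step4 : ∀ z : Fin n × Fin n, (F3 z ^ s') ^ Q = F3 z ^ q := by
      intro z; rw [← Real.rpow_mul (hF3nn z), es'Q]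
    simp only [step3, step4] at step2
    calc ∑ z : Fin n × Fin n, (F2 z * F3 z) ^ s'
        ≤ (∑ z : Fin n × Fin n, F2 z ^ r) ^ (1/P) * (∑ z : Fin n × Fin n, F3 z ^ q) ^ (1/Q) :=
          step1 ▸ step2
      _ ≤ 1 * 1 := by
          apply mul_le_mul
          · exact Real.rpow_le_one
              (Finset.sum_nonneg fun z _ => Real.rpow_nonneg (hF2nn z) _) hF2r
              conjPQ.one_div_nonneg
          · exact Real.rpow_le_one
              (Finset.sum_nonneg fun z _ => Real.rpow_nonneg (hF3nn z) _) hF3q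
              conjPQ.symm.one_div_nonneg
          · exact Real.rpow_nonneg
              (Finset.sum_nonneg fun z _ => Real.rpow_nonneg (hF3nn z) _) _
          · norm_num
      _ = 1 := by norm_num
  -- main chain
  have main : ∑ i, ∑ j, V i j * x i * y j ≤ (∑ i, w i ^ s) ^ (1/s) := by
    calc ∑ i, ∑ j, V i j * x i * y j
        ≤ ∑ i, ∑ j, V i j * |x i| * |y j| := by
          refine Finset.sum_le_sum fun i _ => Finset.sum_le_sum fun j _ => ?_
          calc V i j * x i * y j = V i j * (x i * y j) := by ring
            _ ≤ V i j * (|x i| * |y j|) := by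
                refine mul_le_mul_of_nonneg_left ?_ (hnn i j)
                calc x i * y j ≤ |x i * y j| := le_abs_self _
                  _ = |x i| * |y j| := abs_mul _ _
            _ = V i j * |x i| * |y j| := by ring
      _ = ∑ z : Fin n × Fin n, F1 z * (F2 z * F3 z) := by
          rw [Fintype.sum_prod_type]
          exact Finset.sum_congr rfl fun i _ => Finset.sum_congr rfl fun j _ => key i j
      _ ≤ (∑ z : Fin n × Fin n, F1 z ^ s) ^ (1/s) *
            (∑ z : Fin n × Fin n, (F2 z * F3 z) ^ s') ^ (1/s') :=
          Real.inner_le_Lp_mul_Lq_of_nonneg Finset.univ conj1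
            (fun z _ => hF1nn z) (fun z _ => mul_nonneg (hF2nn z) (hF3nn z))
      _ ≤ (∑ i, w i ^ s) ^ (1/s) * 1 := by
          apply mul_le_mul
          · exact Real.rpow_le_rpow
              (Finset.sum_nonneg fun z _ => Real.rpow_nonneg (hF1nn z) _) hF1s
              conj1.one_div_nonneg
          · exact Real.rpow_le_one
              (Finset.sum_nonneg fun z _ =>
                Real.rpow_nonneg (mul_nonneg (hF2nn z) (hF3nn z)) _) h23
              conj1.symm.one_div_nonneg
          · exact Real.rpow_nonneg
              (Finset.sum_nonneg fun z _ =>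
                Real.rpow_nonneg (mul_nonneg (hF2nn z) (hF3nn z)) _) _
          · exact Real.rpow_nonneg
              (Finset.sum_nonneg fun i _ => Real.rpow_nonneg (hw i) _) _
      _ = (∑ i, w i ^ s) ^ (1/s) := mul_one _
  have hfinal : (r - p) / (r * p) = 1/s := by rw [hs_def, one_div_div]
  rw [hfinal]
  exact main
end

section
/- Fix 1 ≤ p < r ≤ ∞ and set γ = 1/p − 1/r. Let W be a symmetric n×n matrix whose only nonzero entries are W_{2k−1,2k} = W_{2k,2k−1} = c_k for k ∈ [m] with 2m ≤ n. Then ‖W‖_{r→p} = ( 2 Σ_{k=1}^m |c_k|^{1/γ} )^{γ}. -/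
open Matrix ENNReal

private lemma sum_range_two_mul (m : ℕ) (f : ℕ → ℝ) :
    ∑ j ∈ Finset.range (2 * m), f j = ∑ k ∈ Finset.range m, (f (2 * k) + f (2 * k + 1)) := by
  induction m with
  | zero => simp
  | succ m ih =>
    have h2 : 2 * (m + 1) = (2 * m + 1) + 1 := by ring
    rw [h2, Finset.sum_range_succ, Finset.sum_range_succ, ih, Finset.sum_range_succ,
      add_assoc]

private lemma fin_sum_eq {n M : ℕ} (h : M ≤ n) (f : ℕ → ℝ)
    (hf0 : ∀ j, M ≤ j → f j = 0) :
    ∑ i : Fin n, f i.val = ∑ j ∈ Finset.range M, f j := by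
  rw [Fin.sum_univ_eq_sum_range f n]
  exact (Finset.sum_subset (Finset.range_subset_range.2 h)
    (fun j _ hj' => hf0 j (by simpa using hj'))).symm

/-- The `r → p` norm of a symmetric matrix whose only nonzero entries form pairs
`W_{2k-1,2k} = W_{2k,2k-1} = c_k` (0-based: positions `(2k, 2k+1)` for `k < m`)
equals `(2 Σ_k |c_k|^{1/γ})^γ`, where `γ = 1/p - 1/r`. -/
theorem opNorm_paired {n m : ℕ} (W : Matrix (Fin n) (Fin n) ℝ) (hW : W.IsSymm)
    (c : ℕ → ℝ) (hn : 2 * m ≤ n)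
    (r p : ℝ≥0∞) (hp : 1 ≤ p) (hpr : p < r)
    (hsupp : ∀ i j : Fin n, W i j ≠ 0 → ∃ k : ℕ, k < m ∧
      ((i.val = 2 * k ∧ j.val = 2 * k + 1) ∨ (i.val = 2 * k + 1 ∧ j.val = 2 * k)))
    (hval : ∀ k : ℕ, k < m → ∀ i j : Fin n,
      i.val = 2 * k → j.val = 2 * k + 1 → W i j = c k) :
    opNorm r p W =
      (2 * ∑ k ∈ Finset.range m, |c k| ^ (1 / ((p⁻¹).toReal - (r⁻¹).toReal)))
        ^ ((p⁻¹).toReal - (r⁻¹).toReal) := by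
  classical
  have hptop : p ≠ ⊤ := (hpr.trans_le le_top).ne
  have hp0 : p ≠ 0 := (lt_of_lt_of_le zero_lt_one hp).ne'
  have hr0 : r ≠ 0 := (lt_of_le_of_lt zero_le hpr).ne'
  set pp := p.toReal with hppdef
  have hpp1 : 1 ≤ pp := by
    have := ENNReal.toReal_mono hptop hp
    simpa using this
  have hpp0 : 0 < pp := lt_of_lt_of_le one_pos hpp1
  have hpinv : (p⁻¹).toReal = pp⁻¹ := ENNReal.toReal_inv p
  set γ := (p⁻¹).toReal - (r⁻¹).toReal with hγdef
  have hγpos : 0 < γ := by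
    have h1 : r⁻¹ < p⁻¹ := ENNReal.inv_lt_inv.mpr hpr
    have h2 : p⁻¹ ≠ ⊤ := by simpa using hp0
    have h3 : r⁻¹ ≠ ⊤ := by simpa using hr0
    have := (ENNReal.toReal_lt_toReal h3 h2).mpr h1
    simp only [hγdef]
    linarith
  have hγne : γ ≠ 0 := hγpos.ne'
  set S := 2 * ∑ k ∈ Finset.range m, |c k| ^ (1 / γ) with hSdef
  have hsumc0 : 0 ≤ ∑ k ∈ Finset.range m, |c k| ^ (1 / γ) :=
    Finset.sum_nonneg fun _ _ => Real.rpow_nonneg (abs_nonneg _) _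
  have hS0 : 0 ≤ S := by positivity
  -- matrix structure facts
  have hvalB : ∀ k, k < m → ∀ i j : Fin n, i.val = 2 * k + 1 → j.val = 2 * k → W i j = c k := by
    intro k hk i j hi hj
    rw [← hW.apply i j]
    exact hval k hk j i hj hi
  have hrow_zero : ∀ i j : Fin n, 2 * m ≤ i.val → W i j = 0 := by
    intro i j hi
    by_contra h
    obtain ⟨k, hk, hor⟩ := hsupp i j h
    rcases hor with ⟨h1, _⟩ | ⟨h1, _⟩ <;> omega
  have hmv0 : ∀ (x : Fin n → ℝ) (i : Fin n), 2 * m ≤ i.val → W.mulVec x i = 0 := by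
    intro x i hi
    simp only [Matrix.mulVec, dotProduct]
    exact Finset.sum_eq_zero fun j _ => by rw [hrow_zero i j hi, zero_mul]
  have hmvA : ∀ (x : Fin n → ℝ) (k : ℕ), k < m → ∀ (h1 : 2 * k < n) (h2 : 2 * k + 1 < n),
      W.mulVec x ⟨2 * k, h1⟩ = c k * x ⟨2 * k + 1, h2⟩ := by
    intro x k hk h1 h2
    simp only [Matrix.mulVec, dotProduct]
    rw [Finset.sum_eq_single (⟨2 * k + 1, h2⟩ : Fin n)]
    · rw [hval k hk _ _ rfl rfl]
    · intro j _ hj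
      have hz : W ⟨2 * k, h1⟩ j = 0 := by
        by_contra h
        obtain ⟨k', hk', hor⟩ := hsupp _ _ h
        rcases hor with ⟨ha, hb⟩ | ⟨ha, hb⟩
        · simp only at ha hb
          exact hj (Fin.ext (by simp; omega))
        · simp only at ha; omega
      rw [hz, zero_mul]
    · intro h; exact absurd (Finset.mem_univ _) h
  have hmvB : ∀ (x : Fin n → ℝ) (k : ℕ), k < m → ∀ (h1 : 2 * k < n) (h2 : 2 * k + 1 < n),
      W.mulVec x ⟨2 * k + 1, h2⟩ = c k * x ⟨2 * k, h1⟩ := by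
    intro x k hk h1 h2
    simp only [Matrix.mulVec, dotProduct]
    rw [Finset.sum_eq_single (⟨2 * k, h1⟩ : Fin n)]
    · rw [hvalB k hk _ _ rfl rfl]
    · intro j _ hj
      have hz : W ⟨2 * k + 1, h2⟩ j = 0 := by
        by_contra h
        obtain ⟨k', hk', hor⟩ := hsupp _ _ h
        rcases hor with ⟨ha, hb⟩ | ⟨ha, hb⟩
        · simp only at ha; omega
        · simp only at ha hb
          exact hj (Fin.ext (by simp; omega))
      rw [hz, zero_mul]
    · intro h; exact absurd (Finset.mem_univ _) h
  -- key sum formula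
  have hsum : ∀ x : Fin n → ℝ, ∑ i : Fin n, |W.mulVec x i| ^ pp
      = ∑ k ∈ Finset.range m, |c k| ^ pp *
          ((if h : 2 * k < n then |x ⟨2 * k, h⟩| else 0) ^ pp
            + (if h : 2 * k + 1 < n then |x ⟨2 * k + 1, h⟩| else 0) ^ pp) := by
    intro x
    have e1 : ∀ i : Fin n, |W.mulVec x i| ^ pp
        = (fun j => if h : j < n then |W.mulVec x ⟨j, h⟩| ^ pp else 0) i.val := by
      intro i
      simp [i.isLt]
    calc ∑ i : Fin n, |W.mulVec x i| ^ pp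
        = ∑ i : Fin n, (fun j => if h : j < n then |W.mulVec x ⟨j, h⟩| ^ pp else 0) i.val :=
          Finset.sum_congr rfl fun i _ => e1 i
      _ = ∑ j ∈ Finset.range (2 * m),
            (fun j => if h : j < n then |W.mulVec x ⟨j, h⟩| ^ pp else 0) j := by
          refine fin_sum_eq hn (fun j => if h : j < n then |W.mulVec x ⟨j, h⟩| ^ pp else 0) fun j hj => ?_
          by_cases hjn : j < n
          · simp only [dif_pos hjn]
            rw [hmv0 x ⟨j, hjn⟩ (by simpa using hj)]
            simp [Real.zero_rpow hpp0.ne']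
          · simp [hjn]
      _ = ∑ k ∈ Finset.range m, |c k| ^ pp *
            ((if h : 2 * k < n then |x ⟨2 * k, h⟩| else 0) ^ pp
              + (if h : 2 * k + 1 < n then |x ⟨2 * k + 1, h⟩| else 0) ^ pp) := by
          rw [sum_range_two_mul]
          refine Finset.sum_congr rfl fun k hk => ?_
          have hkm : k < m := Finset.mem_range.mp hk
          have h1 : 2 * k < n := by omega
          have h2 : 2 * k + 1 < n := by omega
          simp only [dif_pos h1, dif_pos h2]
          rw [hmvA x k hkm h1 h2, hmvB x k hkm h1 h2, abs_mul, abs_mul,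
            Real.mul_rpow (abs_nonneg _) (abs_nonneg _),
            Real.mul_rpow (abs_nonneg _) (abs_nonneg _)]
          ring
  -- nonnegativity of the key sum
  have hnn : ∀ x : Fin n → ℝ, 0 ≤ ∑ k ∈ Finset.range m, |c k| ^ pp *
        ((if h : 2 * k < n then |x ⟨2 * k, h⟩| else 0) ^ pp
          + (if h : 2 * k + 1 < n then |x ⟨2 * k + 1, h⟩| else 0) ^ pp) := by
    intro x
    refine Finset.sum_nonneg fun k _ => mul_nonneg (Real.rpow_nonneg (abs_nonneg _) _) ?_
    have t1 : (0:ℝ) ≤ (if h : 2 * k < n then |x ⟨2 * k, h⟩| else 0) ^ pp := by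
      apply Real.rpow_nonneg; split
      · exact abs_nonneg _
      · exact le_refl 0
    have t2 : (0:ℝ) ≤ (if h : 2 * k + 1 < n then |x ⟨2 * k + 1, h⟩| else 0) ^ pp := by
      apply Real.rpow_nonneg; split
      · exact abs_nonneg _
      · exact le_refl 0
    linarith
  -- ∞ case : S rewritten
  have hSe_top : r = ⊤ → S = ∑ k ∈ Finset.range m, |c k| ^ pp * 2 := by
    intro hrtop
    have hγeq : γ = pp⁻¹ := by simp [hγdef, hrtop, hpinv]
    have h2 : ∑ k ∈ Finset.range m, |c k| ^ pp * 2
        = 2 * ∑ k ∈ Finset.range m, |c k| ^ pp := by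
      rw [Finset.mul_sum]
      exact Finset.sum_congr rfl fun k _ => mul_comm _ _
    rw [hSdef, h2]
    congr 1
    refine Finset.sum_congr rfl fun k _ => ?_
    congr 1
    rw [hγeq, one_div, inv_inv]
  -- upper bound
  have hub : ∀ b ∈ {b | ∃ x : Fin n → ℝ, lnorm r x ≤ 1 ∧ b = lnorm p (W.mulVec x)},
      b ≤ S ^ γ := by
    rintro b ⟨x, hx, rfl⟩
    have hlp : lnorm p (W.mulVec x) = (∑ i : Fin n, |W.mulVec x i| ^ pp) ^ (1 / pp) := by
      simp [lnorm, hptop]; rfl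
    rw [hlp, hsum x]
    by_cases hrtop : r = ⊤
    · -- r = ∞
      have hγeq : γ = pp⁻¹ := by simp [hγdef, hrtop, hpinv]
      have hxb : ∀ i : Fin n, |x i| ≤ 1 := by
        intro i
        have h1 : |x i| ≤ ⨆ i, |x i| :=
          le_ciSup (f := fun i => |x i|) (Set.Finite.bddAbove (Set.finite_range _)) i
        have h2 : lnorm r x = ⨆ i, |x i| := by simp [lnorm, hrtop]
        rw [h2] at hx
        exact h1.trans hx
      have hbound : ∑ k ∈ Finset.range m, |c k| ^ pp *
            ((if h : 2 * k < n then |x ⟨2 * k, h⟩| else 0) ^ pp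
              + (if h : 2 * k + 1 < n then |x ⟨2 * k + 1, h⟩| else 0) ^ pp)
          ≤ S := by
        rw [hSe_top hrtop]
        refine Finset.sum_le_sum fun k hk => ?_
        have h0 : (0:ℝ) ≤ |c k| ^ pp := Real.rpow_nonneg (abs_nonneg _) _
        refine mul_le_mul_of_nonneg_left ?_ h0
        have t1 : (if h : 2 * k < n then |x ⟨2 * k, h⟩| else 0) ^ pp ≤ 1 := by
          split
          · exact Real.rpow_le_one (abs_nonneg _) (hxb _) hpp0.le
          · simp [Real.zero_rpow hpp0.ne']
        have t2 : (if h : 2 * k + 1 < n then |x ⟨2 * k + 1, h⟩| else 0) ^ pp ≤ 1 := by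
          split
          · exact Real.rpow_le_one (abs_nonneg _) (hxb _) hpp0.le
          · simp [Real.zero_rpow hpp0.ne']
        linarith
      calc (∑ k ∈ Finset.range m, |c k| ^ pp *
            ((if h : 2 * k < n then |x ⟨2 * k, h⟩| else 0) ^ pp
              + (if h : 2 * k + 1 < n then |x ⟨2 * k + 1, h⟩| else 0) ^ pp)) ^ (1 / pp)
          ≤ S ^ (1 / pp) := Real.rpow_le_rpow (hnn x) hbound (by positivity)
        _ = S ^ γ := by rw [hγeq, one_div]
    · -- r finite : Hölder
      set rr := r.toReal with hrrdef
      have hrinv : (r⁻¹).toReal = rr⁻¹ := ENNReal.toReal_inv r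
      have hγeq : γ = pp⁻¹ - rr⁻¹ := by rw [hγdef, hpinv, hrinv]
      have hrr1 : 1 ≤ rr := by
        have := ENNReal.toReal_mono hrtop (hp.trans hpr.le)
        simpa using this
      have hrr0 : 0 < rr := lt_of_lt_of_le one_pos hrr1
      have hpprr : pp < rr := (ENNReal.toReal_lt_toReal hptop hrtop).mpr hpr
      have hppγ : pp * γ = 1 - pp / rr := by
        rw [hγeq, mul_sub, mul_inv_cancel₀ hpp0.ne', div_eq_mul_inv]
      have hppγpos : 0 < pp * γ := mul_pos hpp0 hγpos
      have hppγlt1 : pp * γ < 1 := by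
        rw [hppγ]
        have : 0 < pp / rr := div_pos hpp0 hrr0
        linarith
      have hconj : Real.HolderConjugate (pp * γ)⁻¹ (rr / pp) := by
        rw [Real.holderConjugate_iff]; constructor
        · exact (one_lt_inv₀ hppγpos).mpr hppγlt1
        · rw [inv_inv, inv_div, hppγ]; ring
      have hT : ∑ i : Fin n, |x i| ^ rr ≤ 1 := by
        have hlr : lnorm r x = (∑ i : Fin n, |x i| ^ rr) ^ (1 / rr) := by
          simp [lnorm, hrtop]; rfl
        rw [hlr] at hx
        by_contra hcon
        push_neg at hcon
        have h1 : (1:ℝ) < (∑ i : Fin n, |x i| ^ rr) ^ (1 / rr) :=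
          (Real.one_lt_rpow_iff_of_pos (by linarith)).mpr
            (Or.inl ⟨hcon, by positivity⟩)
        linarith
      set g : ℕ → ℝ := fun j => (if h : j < n then |x ⟨j, h⟩| else 0) ^ pp with hgdef
      have hg0 : ∀ j, 0 ≤ g j := by
        intro j
        apply Real.rpow_nonneg; split
        · exact abs_nonneg _
        · exact le_refl 0
      have hstep : ∑ k ∈ Finset.range m, |c k| ^ pp *
            ((if h : 2 * k < n then |x ⟨2 * k, h⟩| else 0) ^ pp
              + (if h : 2 * k + 1 < n then |x ⟨2 * k + 1, h⟩| else 0) ^ pp)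
          = ∑ j ∈ Finset.range (2 * m), |c (j / 2)| ^ pp * g j := by
        rw [sum_range_two_mul]
        refine Finset.sum_congr rfl fun k hk => ?_
        have e1 : 2 * k / 2 = k := by omega
        have e2 : (2 * k + 1) / 2 = k := by omega
        rw [e1, e2, hgdef]
        ring
      have hH := Real.inner_le_Lp_mul_Lq_of_nonneg (Finset.range (2 * m)) hconj
        (f := fun j => |c (j / 2)| ^ pp) (g := g)
        (fun j _ => Real.rpow_nonneg (abs_nonneg _) _) (fun j _ => hg0 j)
      have hterm1 : (∑ j ∈ Finset.range (2 * m), (|c (j / 2)| ^ pp) ^ (pp * γ)⁻¹)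
            ^ (1 / (pp * γ)⁻¹) = S ^ (pp * γ) := by
        have e0 : ∀ j : ℕ, (|c (j / 2)| ^ pp) ^ (pp * γ)⁻¹ = |c (j / 2)| ^ (1 / γ) := by
          intro j
          rw [← Real.rpow_mul (abs_nonneg _)]
          congr 1
          rw [mul_inv, ← mul_assoc, mul_inv_cancel₀ hpp0.ne', one_mul, one_div]
        have e1 : ∑ j ∈ Finset.range (2 * m), (|c (j / 2)| ^ pp) ^ (pp * γ)⁻¹ = S := by
          rw [Finset.sum_congr rfl fun j _ => e0 j, sum_range_two_mul, hSdef]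
          rw [two_mul, ← Finset.sum_add_distrib]
          refine Finset.sum_congr rfl fun k _ => ?_
          have e2 : 2 * k / 2 = k := by omega
          have e3 : (2 * k + 1) / 2 = k := by omega
          rw [e2, e3]
        rw [e1, one_div, inv_inv]
      have hterm2 : (∑ j ∈ Finset.range (2 * m), g j ^ (rr / pp)) ^ (1 / (rr / pp)) ≤ 1 := by
        have e0 : ∀ j : ℕ, g j ^ (rr / pp)
            = (if h : j < n then |x ⟨j, h⟩| else 0) ^ rr := by
          intro j
          rw [hgdef]
          dsimp only
          rw [← Real.rpow_mul]
          · congr 1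
            rw [mul_comm, div_mul_cancel₀ _ hpp0.ne']
          · split
            · exact abs_nonneg _
            · exact le_refl 0
        have e1 : ∑ j ∈ Finset.range (2 * m), g j ^ (rr / pp)
            ≤ ∑ i : Fin n, |x i| ^ rr := by
          rw [Finset.sum_congr rfl fun j _ => e0 j]
          have e2 : ∑ i : Fin n, |x i| ^ rr
              = ∑ j ∈ Finset.range n, (if h : j < n then |x ⟨j, h⟩| else 0) ^ rr := by
            rw [← Fin.sum_univ_eq_sum_range (fun j => (if h : j < n then |x ⟨j, h⟩| else 0) ^ rr) n]
            exact Finset.sum_congr rfl fun i _ => by simp [i.isLt]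
          rw [e2]
          refine Finset.sum_le_sum_of_subset_of_nonneg (Finset.range_subset_range.2 hn)
            fun j _ _ => ?_
          apply Real.rpow_nonneg; split
          · exact abs_nonneg _
          · exact le_refl 0
        have e3 : ∑ j ∈ Finset.range (2 * m), g j ^ (rr / pp) ≤ 1 := e1.trans hT
        have e4 : (0:ℝ) ≤ ∑ j ∈ Finset.range (2 * m), g j ^ (rr / pp) :=
          Finset.sum_nonneg fun j _ => Real.rpow_nonneg (hg0 j) _
        exact Real.rpow_le_one e4 e3 (by positivity)
      have hfinal : ∑ j ∈ Finset.range (2 * m), |c (j / 2)| ^ pp * g j ≤ S ^ (pp * γ) := by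
        calc ∑ j ∈ Finset.range (2 * m), |c (j / 2)| ^ pp * g j
            ≤ (∑ j ∈ Finset.range (2 * m), (|c (j / 2)| ^ pp) ^ (pp * γ)⁻¹)
                ^ (1 / (pp * γ)⁻¹)
              * (∑ j ∈ Finset.range (2 * m), g j ^ (rr / pp)) ^ (1 / (rr / pp)) := hH
          _ ≤ S ^ (pp * γ) * 1 := by
              rw [hterm1]
              refine mul_le_mul_of_nonneg_left hterm2 (Real.rpow_nonneg hS0 _)
          _ = S ^ (pp * γ) := mul_one _
      rw [hstep]
      calc (∑ j ∈ Finset.range (2 * m), |c (j / 2)| ^ pp * g j) ^ (1 / pp)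
          ≤ (S ^ (pp * γ)) ^ (1 / pp) := by
            refine Real.rpow_le_rpow ?_ hfinal (by positivity)
            exact Finset.sum_nonneg fun j _ =>
              mul_nonneg (Real.rpow_nonneg (abs_nonneg _) _) (hg0 j)
        _ = S ^ γ := by
            rw [← Real.rpow_mul hS0]
            congr 1
            rw [mul_comm pp γ, mul_assoc, mul_one_div, div_self hpp0.ne', mul_one]
  -- membership (the value is attained)
  have hmem : S ^ γ ∈ {b | ∃ x : Fin n → ℝ, lnorm r x ≤ 1 ∧ b = lnorm p (W.mulVec x)} := by
    rcases eq_or_lt_of_le hS0 with hSz | hSpos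
    · -- S = 0
      refine ⟨0, ?_, ?_⟩
      · unfold lnorm
        split
        · exact Real.iSup_le (fun i => by simp) zero_le_one
        · by_cases hq : r.toReal = 0
          · simp [hq]
          · simp only [Pi.zero_apply, abs_zero, Real.zero_rpow hq, Finset.sum_const_zero]
            rw [Real.zero_rpow (one_div_ne_zero hq)]
            norm_num
      · rw [Matrix.mulVec_zero, ← hSz, Real.zero_rpow hγne]
        simp [lnorm, hptop, Real.zero_rpow hpp0.ne',
          Real.zero_rpow (one_div_ne_zero hpp0.ne')]
        rw [Real.zero_rpow (ENNReal.toReal_pos hp0 hptop).ne', mul_zero,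
          Real.zero_rpow (inv_ne_zero (ENNReal.toReal_pos hp0 hptop).ne')]
    · -- S > 0
      by_cases hrtop : r = ⊤
      · -- r = ∞ : take the indicator of the first 2m coordinates
        have hγeq : γ = pp⁻¹ := by simp [hγdef, hrtop, hpinv]
        refine ⟨fun i : Fin n => if i.val < 2 * m then (1:ℝ) else 0, ?_, ?_⟩
        · have h2 : lnorm r (fun i : Fin n => if i.val < 2 * m then (1:ℝ) else 0)
              = ⨆ i, |(fun i : Fin n => if i.val < 2 * m then (1:ℝ) else 0) i| := by
            simp [lnorm, hrtop]
          rw [h2]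
          refine Real.iSup_le (fun i => ?_) zero_le_one
          dsimp only
          split <;> simp
        · have hlp : lnorm p (W.mulVec (fun i : Fin n => if i.val < 2 * m then (1:ℝ) else 0))
              = (∑ i : Fin n,
              |W.mulVec (fun i : Fin n => if i.val < 2 * m then (1:ℝ) else 0) i| ^ pp)
                ^ (1 / pp) := by
            simp [lnorm, hptop]; rfl
          rw [hlp, hsum]
          have e1 : ∑ k ∈ Finset.range m, |c k| ^ pp *
              ((if h : 2 * k < n then
                  |(fun i : Fin n => if i.val < 2 * m then (1:ℝ) else 0) ⟨2 * k, h⟩| else 0) ^ pp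
                + (if h : 2 * k + 1 < n then
                  |(fun i : Fin n => if i.val < 2 * m then (1:ℝ) else 0) ⟨2 * k + 1, h⟩| else 0)
                    ^ pp) = S := by
            rw [hSe_top hrtop]
            refine Finset.sum_congr rfl fun k hk => ?_
            have hkm : k < m := Finset.mem_range.mp hk
            have h1 : 2 * k < n := by omega
            have h2 : 2 * k + 1 < n := by omega
            rw [dif_pos h1, dif_pos h2]
            simp only
            rw [if_pos (show 2 * k < 2 * m by omega), if_pos (show 2 * k + 1 < 2 * m by omega)]
            simp [Real.one_rpow]
            norm_num
          rw [e1, hγeq, one_div]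
      · -- r finite : take the explicit optimizer
        set rr := r.toReal with hrrdef
        have hrinv : (r⁻¹).toReal = rr⁻¹ := ENNReal.toReal_inv r
        have hγeq : γ = pp⁻¹ - rr⁻¹ := by rw [hγdef, hpinv, hrinv]
        have hrr1 : 1 ≤ rr := by
          have := ENNReal.toReal_mono hrtop (hp.trans hpr.le)
          simpa using this
        have hrr0 : 0 < rr := lt_of_lt_of_le one_pos hrr1
        have hppγ : pp * γ = 1 - pp / rr := by
          rw [hγeq, mul_sub, mul_inv_cancel₀ hpp0.ne', div_eq_mul_inv]
        set e : ℝ := 1 / (γ * rr) with hedef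
        have hea : ∀ k : ℕ, (0:ℝ) ≤ |c k| ^ e / S ^ (1 / rr) := fun k => by positivity
        set x : Fin n → ℝ := fun i =>
          if i.val < 2 * m then |c (i.val / 2)| ^ e / S ^ (1 / rr) else 0 with hxdef
        have hx0 : ∀ i, 0 ≤ x i := by
          intro i; rw [hxdef]; dsimp only; split
          · exact hea _
          · exact le_refl 0
        -- the r-norm of x equals 1
        have hxr : ∑ i : Fin n, |x i| ^ rr = 1 := by
          have e1 : ∀ i : Fin n, |x i| ^ rr = (fun j =>
              if j < 2 * m then (|c (j / 2)| ^ e / S ^ (1 / rr)) ^ rr else 0) i.val := by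
            intro i
            rw [abs_of_nonneg (hx0 i), hxdef]
            dsimp only
            split
            · rfl
            · exact Real.zero_rpow hrr0.ne'
          rw [Finset.sum_congr rfl fun i _ => e1 i]
          rw [fin_sum_eq hn
            (fun j => if j < 2 * m then (|c (j / 2)| ^ e / S ^ (1 / rr)) ^ rr else 0)
            (fun j hj => by exact if_neg (by omega))]
          rw [sum_range_two_mul]
          have e2 : ∀ k ∈ Finset.range m,
              ((fun j => if j < 2 * m then (|c (j / 2)| ^ e / S ^ (1 / rr)) ^ rr else 0) (2 * k)
              + (fun j => if j < 2 * m then (|c (j / 2)| ^ e / S ^ (1 / rr)) ^ rr else 0)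
                  (2 * k + 1))
              = 2 * (|c k| ^ (1 / γ) / S) := by
            intro k hk
            have hkm : k < m := Finset.mem_range.mp hk
            dsimp only
            rw [if_pos (show 2 * k < 2 * m by omega), if_pos (show 2 * k + 1 < 2 * m by omega)]
            have e3 : 2 * k / 2 = k := by omega
            have e4 : (2 * k + 1) / 2 = k := by omega
            rw [e3, e4]
            have e5 : (|c k| ^ e / S ^ (1 / rr)) ^ rr = |c k| ^ (1 / γ) / S := by
              rw [Real.div_rpow (Real.rpow_nonneg (abs_nonneg _) _)
                (Real.rpow_nonneg hS0 _), ← Real.rpow_mul (abs_nonneg _),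
                ← Real.rpow_mul hS0]
              congr 1
              · congr 1
                rw [hedef]; field_simp <;> ring
              · rw [one_div_mul_cancel hrr0.ne', Real.rpow_one]
            rw [e5]; ring
          rw [Finset.sum_congr rfl e2, ← Finset.mul_sum, ← Finset.sum_div, ← mul_div_assoc,
            ← hSdef]
          exact div_self hSpos.ne'
        refine ⟨x, ?_, ?_⟩
        · have hlr : lnorm r x = (∑ i : Fin n, |x i| ^ rr) ^ (1 / rr) := by
            simp [lnorm, hrtop]; rfl
          rw [hlr, hxr, Real.one_rpow]
        · have hlp : lnorm p (W.mulVec x) = (∑ i : Fin n, |W.mulVec x i| ^ pp) ^ (1 / pp) := by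
            simp [lnorm, hptop]; rfl
          rw [hlp, hsum x]
          have hxval : ∀ (j : ℕ) (hj : j < n), j < 2 * m →
              x ⟨j, hj⟩ = |c (j / 2)| ^ e / S ^ (1 / rr) := by
            intro j hj hj2
            rw [hxdef]
            dsimp only
            rw [if_pos hj2]
          have h2 : pp * γ * rr = rr - pp := by
            rw [hγeq, mul_sub, mul_inv_cancel₀ hpp0.ne', sub_mul, one_mul, mul_assoc,
              inv_mul_cancel₀ hrr0.ne', mul_one]
          have hkey : pp + e * pp = 1 / γ := by
            rw [hedef]
            have hγrr : γ * rr ≠ 0 := by positivity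
            rw [eq_div_iff hγne, add_mul, show 1 / (γ * rr) * pp * γ = pp / rr by
              rw [div_mul_eq_mul_div, one_mul, div_mul_eq_mul_div, mul_comm pp γ,
                mul_div_mul_left _ _ hγne], hppγ]
            ring
          have e1 : ∑ k ∈ Finset.range m, |c k| ^ pp *
              ((if h : 2 * k < n then |x ⟨2 * k, h⟩| else 0) ^ pp
                + (if h : 2 * k + 1 < n then |x ⟨2 * k + 1, h⟩| else 0) ^ pp)
              = S / S ^ ((1 / rr) * pp) := by
            have e2 : ∀ k ∈ Finset.range m, |c k| ^ pp *
                ((if h : 2 * k < n then |x ⟨2 * k, h⟩| else 0) ^ pp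
                  + (if h : 2 * k + 1 < n then |x ⟨2 * k + 1, h⟩| else 0) ^ pp)
                = 2 * (|c k| ^ (1 / γ) / S ^ ((1 / rr) * pp)) := by
              intro k hk
              have hkm : k < m := Finset.mem_range.mp hk
              have h1 : 2 * k < n := by omega
              have h2 : 2 * k + 1 < n := by omega
              rw [dif_pos h1, dif_pos h2, hxval _ h1 (by omega), hxval _ h2 (by omega)]
              have e3 : 2 * k / 2 = k := by omega
              have e4 : (2 * k + 1) / 2 = k := by omega
              rw [e3, e4, abs_of_nonneg (hea k)]
              have e5 : (|c k| ^ e / S ^ (1 / rr)) ^ pp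
                  = |c k| ^ (e * pp) / S ^ ((1 / rr) * pp) := by
                rw [Real.div_rpow (Real.rpow_nonneg (abs_nonneg _) _)
                  (Real.rpow_nonneg hS0 _), ← Real.rpow_mul (abs_nonneg _),
                  ← Real.rpow_mul hS0]
              rw [e5]
              rw [show |c k| ^ pp * (|c k| ^ (e * pp) / S ^ ((1 / rr) * pp)
                  + |c k| ^ (e * pp) / S ^ ((1 / rr) * pp))
                = 2 * ((|c k| ^ pp * |c k| ^ (e * pp)) / S ^ ((1 / rr) * pp)) by ring]
              congr 2
              rw [← Real.rpow_add' (abs_nonneg _) (by rw [hkey]; positivity)]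
              rw [hkey]
            rw [Finset.sum_congr rfl e2, ← Finset.mul_sum, ← Finset.sum_div, ← mul_div_assoc,
              ← hSdef]
          rw [e1]
          have e6 : S / S ^ ((1 / rr) * pp) = S ^ (pp * γ) := by
            rw [show S / S ^ ((1 / rr) * pp) = S ^ (1:ℝ) / S ^ ((1 / rr) * pp) by
              rw [Real.rpow_one]]
            rw [← Real.rpow_sub hSpos]
            congr 1
            rw [hppγ]
            ring
          rw [e6, ← Real.rpow_mul hS0]
          symm
          congr 1
          rw [mul_comm pp γ, mul_assoc, mul_one_div, div_self hpp0.ne', mul_one]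
  -- conclude
  rw [opNorm]
  exact le_antisymm (csSup_le ⟨_, hmem⟩ hub)
    (le_csSup ⟨S ^ γ, fun b hb => hub b hb⟩ hmem)
end

section
/- Let 1 ≤ p < r ≤ ∞, γ = 1/p − 1/r, and let (c_k)_{k∈[m]} be reals. For any x, y ∈ ℝⁿ (n ≥ 2m) with ‖x‖_r = 1 and ‖y‖_{p*} = 1, Σ_{k=1}^m ( c_k x_{2k} y_{2k−1} + c_k x_{2k−1} y_{2k} ) ≤ ( 2 Σ_{k=1}^m |c_k|^{1/γ} )^{γ}. -/
open ENNReal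

/-- The Hölder conjugate of `p ∈ [1,∞]`. -/
noncomputable def holderConj (p : ℝ≥0∞) : ℝ≥0∞ :=
  if p = 1 then ⊤ else if p = ⊤ then 1 else ENNReal.ofReal (p.toReal / (p.toReal - 1))

lemma holder_core {ι : Type*} [Fintype ι] {γ : ℝ} (hγ0 : 0 < γ) (hγ1 : γ < 1)
    (a b : ι → ℝ) (ha : ∀ i, 0 ≤ a i) (hb : ∀ i, 0 ≤ b i)
    (hbsum : ∑ i, b i ^ (1 / (1 - γ)) ≤ 1) :
    ∑ i, a i * b i ≤ (∑ i, a i ^ (1 / γ)) ^ γ := by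
  have h1γ : 0 < 1 - γ := by linarith
  have hconj : Real.HolderConjugate (1 / γ) (1 / (1 - γ)) := by
    rw [Real.holderConjugate_iff]; constructor
    · rw [lt_div_iff₀ hγ0]; linarith
    · rw [one_div, one_div, inv_inv, inv_inv]; ring
  calc ∑ i, a i * b i
      ≤ (∑ i, a i ^ (1 / γ)) ^ (1 / (1 / γ)) * (∑ i, b i ^ (1 / (1 - γ))) ^ (1 / (1 / (1 - γ))) :=
        Real.inner_le_Lp_mul_Lq_of_nonneg _ hconj (fun i _ => ha i) (fun i _ => hb i)
    _ = (∑ i, a i ^ (1 / γ)) ^ γ * (∑ i, b i ^ (1 / (1 - γ))) ^ (1 - γ) := by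
        rw [one_div_one_div, one_div_one_div]
    _ ≤ (∑ i, a i ^ (1 / γ)) ^ γ * 1 := by
        gcongr
        · exact Real.rpow_nonneg (Finset.sum_nonneg fun i _ => Real.rpow_nonneg (ha i) _) _
        · exact Real.rpow_le_one (Finset.sum_nonneg fun i _ => Real.rpow_nonneg (hb i) _)
            hbsum h1γ.le
    _ = _ := mul_one _

lemma sum_comp_le {ι κ : Type*} [Fintype ι] [Fintype κ] [DecidableEq κ] {e : ι → κ}
    (he : Function.Injective e) {f : κ → ℝ} (hf : ∀ i, 0 ≤ f i) :
    ∑ i, f (e i) ≤ ∑ i, f i := by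
  have h := Finset.sum_image (s := (Finset.univ : Finset ι)) (f := f) (g := e)
    (fun a _ b _ hab => he hab)
  rw [← h]
  exact Finset.sum_le_sum_of_subset_of_nonneg (Finset.subset_univ _) (fun i _ _ => hf i)

lemma lnorm_eq_one_sum {n : ℕ} {q : ℝ≥0∞} (hq : q ≠ ⊤) (hq0 : 0 < q.toReal) {z : Fin n → ℝ}
    (hz : lnorm q z = 1) : ∑ i, |z i| ^ q.toReal = 1 := by
  rw [lnorm, if_neg hq] at hz
  have h0 : (0:ℝ) ≤ ∑ i, |z i| ^ q.toReal :=
    Finset.sum_nonneg fun i _ => Real.rpow_nonneg (abs_nonneg _) _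
  calc ∑ i, |z i| ^ q.toReal
      = ((∑ i, |z i| ^ q.toReal) ^ (1 / q.toReal)) ^ q.toReal := by
        rw [← Real.rpow_mul h0, one_div, inv_mul_cancel₀ hq0.ne', Real.rpow_one]
    _ = 1 := by rw [hz, Real.one_rpow]

lemma lnorm_top_le {n : ℕ} {z : Fin n → ℝ} (hz : lnorm ⊤ z = 1) (i : Fin n) : |z i| ≤ 1 := by
  rw [lnorm, if_pos rfl] at hz
  rw [← hz]
  exact le_ciSup (f := fun i => |z i|) (Set.Finite.bddAbove (Set.finite_range _)) i

def pairIdx (n m : ℕ) (hn : 2 * m ≤ n) (o : Bool) (j : Fin m × Bool) : Fin n :=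
  ⟨2 * j.1.val + (if j.2 = o then 1 else 0), by have := j.1.isLt; split <;> omega⟩

lemma pairIdx_inj (n m : ℕ) (hn : 2 * m ≤ n) (o : Bool) :
    Function.Injective (pairIdx n m hn o) := by
  rintro ⟨k, b⟩ ⟨k', b'⟩ h
  have h' : 2 * k.val + (if b = o then 1 else 0) = 2 * k'.val + (if b' = o then 1 else 0) :=
    congrArg Fin.val h
  have hk : k = k' := Fin.ext (by split at h' <;> split at h' <;> omega)
  have hkv : k.val = k'.val := congrArg Fin.val hk
  have hb : b = b' := by cases b <;> cases b' <;> cases o <;> simp_all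
  rw [hk, hb]

/-- Hölder bound for the paired bilinear form: with `γ = 1/p - 1/r` and
0-based indexing (1-based pair `(2k-1, 2k)` becomes `(2k, 2k+1)` for `k < m`),
`Σ_k (c_k x_{2k} y_{2k-1} + c_k x_{2k-1} y_{2k}) ≤ (2 Σ_k |c_k|^{1/γ})^γ`. -/
theorem paired_bilinear_le {n m : ℕ} (hn : 2 * m ≤ n) (c : Fin m → ℝ)
    (r p : ℝ≥0∞) (hp : 1 ≤ p) (hpr : p < r)
    (x y : Fin n → ℝ) (hx : lnorm r x = 1) (hy : lnorm (holderConj p) y = 1) :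
    (∑ k : Fin m,
        (c k * x ⟨2 * k.val + 1, by have := k.isLt; omega⟩
             * y ⟨2 * k.val, by have := k.isLt; omega⟩
         + c k * x ⟨2 * k.val, by have := k.isLt; omega⟩
             * y ⟨2 * k.val + 1, by have := k.isLt; omega⟩)) ≤
      (2 * ∑ k : Fin m, |c k| ^ (1 / ((p⁻¹).toReal - (r⁻¹).toReal)))
        ^ ((p⁻¹).toReal - (r⁻¹).toReal) := by
  classical
  have hpt : p ≠ ⊤ := hpr.ne_top
  have hP1 : 1 ≤ p.toReal := by
    rw [← ENNReal.toReal_one]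
    exact ENNReal.toReal_mono hpt hp
  have hP0 : (0:ℝ) < p.toReal := lt_of_lt_of_le zero_lt_one hP1
  have hip : (p⁻¹).toReal = (p.toReal)⁻¹ := ENNReal.toReal_inv p
  have hir : (r⁻¹).toReal = (r.toReal)⁻¹ := ENNReal.toReal_inv r
  set P := p.toReal with hPdef
  set γ := (p⁻¹).toReal - (r⁻¹).toReal with hγdef
  have hγeq : γ = P⁻¹ - (r.toReal)⁻¹ := by rw [hγdef, hip, hir]
  have hγpos : 0 < γ := by
    rcases eq_or_ne r ⊤ with rfl | hrt
    · rw [hγeq]; simp; positivity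
    · have hPR : P < r.toReal := (ENNReal.toReal_lt_toReal hpt hrt).mpr hpr
      have : (r.toReal)⁻¹ < P⁻¹ := by
        apply inv_strictAnti₀ hP0 hPR
      rw [hγeq]; linarith
  have hγ1 : γ ≤ 1 := by
    have h1 : P⁻¹ ≤ 1 := inv_le_one_of_one_le₀ hP1
    have h2 : (0:ℝ) ≤ (r.toReal)⁻¹ := by positivity
    rw [hγeq]; linarith
  rcases Nat.eq_zero_or_pos m with rfl | hm
  · simp [Real.zero_rpow hγpos.ne']
  -- abbreviations
  set X : Fin m × Bool → Fin n := pairIdx n m hn true with hXdef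
  set Y : Fin m × Bool → Fin n := pairIdx n m hn false with hYdef
  set a : Fin m × Bool → ℝ := fun j => |c j.1| with hadef
  set b : Fin m × Bool → ℝ := fun j => |x (X j)| * |y (Y j)| with hbdef
  have ha : ∀ j, 0 ≤ a j := fun j => abs_nonneg _
  have hb : ∀ j, 0 ≤ b j := fun j => mul_nonneg (abs_nonneg _) (abs_nonneg _)
  have hasum : ∑ j : Fin m × Bool, a j ^ (1 / γ) = 2 * ∑ k : Fin m, |c k| ^ (1 / γ) := by
    rw [Fintype.sum_prod_type, Finset.mul_sum]
    refine Finset.sum_congr rfl fun k _ => ?_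
    rw [Fintype.sum_bool]
    simp only [hadef]
    ring
  have step2 : ∑ j : Fin m × Bool, a j * b j ≤
      (2 * ∑ k : Fin m, |c k| ^ (1 / γ)) ^ γ := by
    rcases eq_or_lt_of_le hγ1 with hγe | hγlt
    · -- γ = 1 : here p = 1 and r = ⊤
      have hγe := hγe.symm
      rw [hγeq] at hγe
      have h1 : P⁻¹ ≤ 1 := inv_le_one_of_one_le₀ hP1
      have h2 : (0:ℝ) ≤ (r.toReal)⁻¹ := by positivity
      have hPinv : P⁻¹ = 1 := by linarith
      have hrinv : (r.toReal)⁻¹ = 0 := by linarith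
      have hPe : P = 1 := by rwa [inv_eq_one] at hPinv
      have hp1 : p = 1 := by
        rwa [ENNReal.toReal_eq_one_iff] at hPe
      have hrt : r = ⊤ := by
        by_contra hrt
        have hPR : P < r.toReal := (ENNReal.toReal_lt_toReal hpt hrt).mpr hpr
        have hR0 : (0:ℝ) < r.toReal := lt_trans hP0 hPR
        have : (0:ℝ) < (r.toReal)⁻¹ := by positivity
        linarith
      have hxle : ∀ i, |x i| ≤ 1 := lnorm_top_le (hrt ▸ hx)
      have hyle : ∀ i, |y i| ≤ 1 := by
        have hcj : holderConj p = ⊤ := by rw [hp1, holderConj, if_pos rfl]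
        exact lnorm_top_le (hcj ▸ hy)
      have hγe1 : γ = 1 := by rw [hγeq]; linarith
      rw [hγe1] at hasum ⊢
      simp only [one_div_one, Real.rpow_one] at hasum ⊢
      calc ∑ j : Fin m × Bool, a j * b j
          ≤ ∑ j : Fin m × Bool, a j * 1 := Finset.sum_le_sum fun j _ =>
            mul_le_mul_of_nonneg_left
              (mul_le_one₀ (hxle _) (abs_nonneg _) (hyle _)) (ha j)
        _ = ∑ j : Fin m × Bool, a j := by simp
        _ = 2 * ∑ k : Fin m, |c k| := hasum
    · -- γ < 1
      have h1γ0 : (0:ℝ) < 1 - γ := by linarith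
      have hbsum : ∑ j : Fin m × Bool, b j ^ (1 / (1 - γ)) ≤ 1 := by
        rcases eq_or_ne p 1 with hp1 | hp1 <;> rcases eq_or_ne r ⊤ with hrt | hrt
        · -- p = 1, r = ⊤ : impossible since γ < 1
          exfalso
          have hPe : P = 1 := by rw [hPdef, hp1, ENNReal.toReal_one]
          have : γ = 1 := by rw [hγeq, hPe, hrt]; simp
          linarith
        · -- p = 1, r ≠ ⊤
          have hyle : ∀ i, |y i| ≤ 1 := by
            have hcj : holderConj p = ⊤ := by rw [hp1, holderConj, if_pos rfl]
            exact lnorm_top_le (hcj ▸ hy)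
          have hPR : P < r.toReal := (ENNReal.toReal_lt_toReal hpt hrt).mpr hpr
          have hR0 : (0:ℝ) < r.toReal := lt_trans hP0 hPR
          have hxsum : ∑ i, |x i| ^ r.toReal = 1 := lnorm_eq_one_sum hrt hR0 hx
          have hPe : P = 1 := by rw [hPdef, hp1, ENNReal.toReal_one]
          have hs : 1 / (1 - γ) = r.toReal := by
            rw [hγeq, hPe]
            rw [show (1:ℝ) - ((1:ℝ)⁻¹ - (r.toReal)⁻¹) = (r.toReal)⁻¹ by norm_num]
            rw [one_div, inv_inv]
          rw [hs]
          calc ∑ j : Fin m × Bool, b j ^ r.toReal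
              ≤ ∑ j : Fin m × Bool, |x (X j)| ^ r.toReal := by
                refine Finset.sum_le_sum fun j _ => ?_
                simp only [hbdef]
                rw [Real.mul_rpow (abs_nonneg _) (abs_nonneg _)]
                exact mul_le_of_le_one_right (Real.rpow_nonneg (abs_nonneg _) _)
                  (Real.rpow_le_one (abs_nonneg _) (hyle _) hR0.le)
            _ ≤ ∑ i, |x i| ^ r.toReal :=
                sum_comp_le (pairIdx_inj n m hn true)
                  (fun i => Real.rpow_nonneg (abs_nonneg _) _)
            _ = 1 := hxsum
        · -- p ≠ 1, r = ⊤
          have hPlt : 1 < P := by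
            rw [hPdef, ← ENNReal.toReal_one]
            exact ENNReal.toReal_strict_mono hpt (lt_of_le_of_ne hp (Ne.symm hp1))
          have hPs0 : (0:ℝ) < P / (P - 1) := by
            apply div_pos hP0; linarith
          have hcj : holderConj p = ENNReal.ofReal (P / (P - 1)) := by
            rw [holderConj, if_neg hp1, if_neg hpt]
          have hqne : holderConj p ≠ ⊤ := by rw [hcj]; exact ENNReal.ofReal_ne_top
          have hqtr : (holderConj p).toReal = P / (P - 1) := by
            rw [hcj, ENNReal.toReal_ofReal hPs0.le]
          have hysum : ∑ i, |y i| ^ (P / (P - 1)) = 1 := by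
            have := lnorm_eq_one_sum hqne (by rw [hqtr]; exact hPs0) hy
            rwa [hqtr] at this
          have hxle : ∀ i, |x i| ≤ 1 := lnorm_top_le (hrt ▸ hx)
          have hPsinv : (P / (P - 1))⁻¹ = 1 - P⁻¹ := by
            rw [inv_div, sub_div, div_self hP0.ne', one_div]
          have hs : 1 / (1 - γ) = P / (P - 1) := by
            have hr0 : (r.toReal)⁻¹ = 0 := by rw [hrt]; simp
            rw [hγeq, hr0, sub_zero, ← hPsinv, one_div, inv_inv]
          rw [hs]
          calc ∑ j : Fin m × Bool, b j ^ (P / (P - 1))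
              ≤ ∑ j : Fin m × Bool, |y (Y j)| ^ (P / (P - 1)) := by
                refine Finset.sum_le_sum fun j _ => ?_
                simp only [hbdef]
                rw [Real.mul_rpow (abs_nonneg _) (abs_nonneg _)]
                exact mul_le_of_le_one_left (Real.rpow_nonneg (abs_nonneg _) _)
                  (Real.rpow_le_one (abs_nonneg _) (hxle _) hPs0.le)
            _ ≤ ∑ i, |y i| ^ (P / (P - 1)) :=
                sum_comp_le (pairIdx_inj n m hn false)
                  (fun i => Real.rpow_nonneg (abs_nonneg _) _)
            _ = 1 := hysum
        · -- p ≠ 1, r ≠ ⊤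
          have hPlt : 1 < P := by
            rw [hPdef, ← ENNReal.toReal_one]
            exact ENNReal.toReal_strict_mono hpt (lt_of_le_of_ne hp (Ne.symm hp1))
          set R := r.toReal with hRdef
          set Ps := P / (P - 1) with hPsdef
          have hPs0 : (0:ℝ) < Ps := by
            apply div_pos hP0; linarith
          have hcj : holderConj p = ENNReal.ofReal Ps := by
            rw [holderConj, if_neg hp1, if_neg hpt]
          have hqne : holderConj p ≠ ⊤ := by rw [hcj]; exact ENNReal.ofReal_ne_top
          have hqtr : (holderConj p).toReal = Ps := by
            rw [hcj, ENNReal.toReal_ofReal hPs0.le]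
          have hysum : ∑ i, |y i| ^ Ps = 1 := by
            have := lnorm_eq_one_sum hqne (by rw [hqtr]; exact hPs0) hy
            rwa [hqtr] at this
          have hPR : P < R := (ENNReal.toReal_lt_toReal hpt hrt).mpr hpr
          have hR0 : (0:ℝ) < R := lt_trans hP0 hPR
          have hxsum : ∑ i, |x i| ^ R = 1 := lnorm_eq_one_sum hrt hR0 hx
          have hPsinv : Ps⁻¹ = 1 - P⁻¹ := by
            rw [hPsdef, inv_div, sub_div, div_self hP0.ne', one_div]
          set s := 1 / (1 - γ) with hsdef
          have hse : s = (1 - γ)⁻¹ := one_div _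
          have ht : 1 - γ = R⁻¹ + Ps⁻¹ := by rw [hγeq, hPsinv]; ring
          have hs0 : (0:ℝ) < s := by rw [hse]; positivity
          have hRs : R * (1 - γ) = 1 + R * Ps⁻¹ := by
            rw [ht, mul_add, mul_inv_cancel₀ hR0.ne']
          have hconj : Real.HolderConjugate (R / s) (Ps / s) := by
            rw [Real.holderConjugate_iff]; constructor
            · rw [hse, div_eq_mul_inv, inv_inv, hRs]
              have : (0:ℝ) < R * Ps⁻¹ := by positivity
              linarith
            · rw [inv_div, inv_div, div_eq_mul_inv s R, div_eq_mul_inv s Ps, ← mul_add]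
              rw [hse, ← ht, inv_mul_cancel₀ h1γ0.ne']
          have e1 : ∀ j : Fin m × Bool, (|x (X j)| ^ s) ^ (R / s) = |x (X j)| ^ R := fun j => by
            rw [← Real.rpow_mul (abs_nonneg _)]
            congr 1
            field_simp
          have e2 : ∀ j : Fin m × Bool, (|y (Y j)| ^ s) ^ (Ps / s) = |y (Y j)| ^ Ps := fun j => by
            rw [← Real.rpow_mul (abs_nonneg _)]
            congr 1
            field_simp
          have hx1 : ∑ j : Fin m × Bool, |x (X j)| ^ R ≤ 1 :=
            le_trans (sum_comp_le (pairIdx_inj n m hn true)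
              (fun i => Real.rpow_nonneg (abs_nonneg _) _)) (le_of_eq hxsum)
          have hy1 : ∑ j : Fin m × Bool, |y (Y j)| ^ Ps ≤ 1 :=
            le_trans (sum_comp_le (pairIdx_inj n m hn false)
              (fun i => Real.rpow_nonneg (abs_nonneg _) _)) (le_of_eq hysum)
          calc ∑ j : Fin m × Bool, b j ^ s
              = ∑ j : Fin m × Bool, (|x (X j)| ^ s) * (|y (Y j)| ^ s) := by
                refine Finset.sum_congr rfl fun j _ => ?_
                simp only [hbdef]
                exact Real.mul_rpow (abs_nonneg _) (abs_nonneg _)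
            _ ≤ (∑ j : Fin m × Bool, (|x (X j)| ^ s) ^ (R / s)) ^ (1 / (R / s)) *
                  (∑ j : Fin m × Bool, (|y (Y j)| ^ s) ^ (Ps / s)) ^ (1 / (Ps / s)) :=
                Real.inner_le_Lp_mul_Lq_of_nonneg _ hconj
                  (fun j _ => Real.rpow_nonneg (abs_nonneg _) _)
                  (fun j _ => Real.rpow_nonneg (abs_nonneg _) _)
            _ = (∑ j : Fin m × Bool, |x (X j)| ^ R) ^ (1 / (R / s)) *
                  (∑ j : Fin m × Bool, |y (Y j)| ^ Ps) ^ (1 / (Ps / s)) := by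
                rw [Finset.sum_congr rfl fun j _ => e1 j, Finset.sum_congr rfl fun j _ => e2 j]
            _ ≤ 1 * 1 := by
                have hA : (0:ℝ) ≤ 1 / (R / s) := by positivity
                have hB : (0:ℝ) ≤ 1 / (Ps / s) := by positivity
                refine mul_le_mul ?_ ?_ ?_ zero_le_one
                · exact Real.rpow_le_one (Finset.sum_nonneg fun j _ =>
                    Real.rpow_nonneg (abs_nonneg _) _) hx1 hA
                · exact Real.rpow_le_one (Finset.sum_nonneg fun j _ =>
                    Real.rpow_nonneg (abs_nonneg _) _) hy1 hB
                · exact Real.rpow_nonneg (Finset.sum_nonneg fun j _ =>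
                    Real.rpow_nonneg (abs_nonneg _) _) _
            _ = 1 := mul_one 1
      calc ∑ j : Fin m × Bool, a j * b j
          ≤ (∑ j : Fin m × Bool, a j ^ (1 / γ)) ^ γ :=
            holder_core hγpos hγlt a b ha hb hbsum
        _ = (2 * ∑ k : Fin m, |c k| ^ (1 / γ)) ^ γ := by rw [hasum]
  refine le_trans ?_ step2
  rw [Fintype.sum_prod_type]
  refine Finset.sum_le_sum fun k _ => ?_
  rw [Fintype.sum_bool]
  refine add_le_add ?_ ?_
  · refine le_trans (le_abs_self _) (le_of_eq ?_)
    simp only [hadef, hbdef, hXdef, hYdef, pairIdx]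
    norm_num
    rw [mul_assoc]
  · refine le_trans (le_abs_self _) (le_of_eq ?_)
    simp only [hadef, hbdef, hXdef, hYdef, pairIdx]
    norm_num
    rw [mul_assoc]
end
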